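/- If m is an odd integer with m ≥ 1, then for all integers n ≥ 1 and r ≥ 0, the sum ∑_{k=0}^{n} C(n,k) (-1)^{C(k+r,m)} is nonnegative. In particular, the sequence (f_{m,n}(-1))_{n≥1} is absolutely monotonic. -/

import Mathlib

open Finset

private lemma pascal_sum (a : ℕ → ℤ) (n : ℕ) :
    ∑ k ∈ range (n+2), ((n+1).choose k : ℤ) * a k
      = ∑ k ∈ range (n+1), (n.choose k : ℤ) * a k
        + ∑ k ∈ range (n+1), (n.choose k : ℤ) * a (k+1) := by
  rw [Finset.sum_range_succ' (fun k => ((n+1).choose k : ℤ) * a k) (n+1)]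
  have h1 : ∀ k ∈ range (n+1),
      (((n+1).choose (k+1) : ℤ)) * a (k+1)
        = (n.choose k : ℤ) * a (k+1) + (n.choose (k+1) : ℤ) * a (k+1) := by
    intro k hk
    rw [Nat.choose_succ_succ]
    push_cast; ring
  rw [Finset.sum_congr rfl h1, Finset.sum_add_distrib]
  have h2 : ∑ k ∈ range (n+1), (n.choose k : ℤ) * a k
      = ∑ k ∈ range (n+1), (n.choose (k+1) : ℤ) * a (k+1) + ((n.choose 0 : ℤ)) * a 0 := by
    rw [Finset.sum_range_succ' (fun k => (n.choose k : ℤ) * a k) n,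
      Finset.sum_range_succ (fun k => (n.choose (k+1) : ℤ) * a (k+1)) n]
    simp [Nat.choose_succ_self]
  rw [h2]
  simp only [Nat.choose_zero_right, Nat.cast_one, one_mul]
  ring

private lemma eps_even (m : ℕ) (hm : 1 ≤ m) (hodd : Odd m) (j : ℕ) (hj : Even j) :
    (-1 : ℤ) ^ (j.choose m) = 1 := by
  obtain ⟨s, rfl⟩ := hj
  rcases Nat.eq_zero_or_pos s with rfl | hs
  · simp [Nat.choose_eq_zero_of_lt hm]
  · have key : (s + s) * (s + s - 1).choose (m - 1) = (s + s).choose m * m := by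
      have h := Nat.add_one_mul_choose_eq (s + s - 1) (m - 1)
      have hss : (s + s - 1).succ = s + s := by omega
      have hmm : (m - 1).succ = m := by omega
      rw [Nat.succ_eq_add_one] at hss hmm
      rwa [hss, hmm] at h
    have h2 : 2 ∣ (s + s).choose m * m := by
      rw [← key]
      exact Dvd.dvd.mul_right ⟨s, by ring⟩ _
    have hE : Even ((s + s).choose m) := by
      rcases (Nat.prime_two.dvd_mul.mp h2) with h | h
      · obtain ⟨t, ht⟩ := h; exact ⟨t, by omega⟩
      · obtain ⟨t, rfl⟩ := hodd; omega
    exact Even.neg_one_pow hE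

private lemma eps_pair (m : ℕ) (hm : 1 ≤ m) (hodd : Odd m) (r : ℕ) :
    0 ≤ (-1:ℤ)^(r.choose m) + (-1:ℤ)^((r+1).choose m) := by
  rcases Nat.even_or_odd r with h | h
  · rw [eps_even m hm hodd r h]
    rcases neg_one_pow_eq_or ℤ ((r+1).choose m) with h' | h' <;> rw [h'] <;> norm_num
  · rw [eps_even m hm hodd (r+1) (by rcases h with ⟨t, rfl⟩; exact ⟨t+1, by ring⟩)]
    rcases neg_one_pow_eq_or ℤ (r.choose m) with h' | h' <;> rw [h'] <;> norm_num

private lemma Trec (m n r : ℕ) :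
    ∑ k ∈ range (n+2), ((n+1).choose k : ℤ) * (-1:ℤ)^((k+r).choose m)
      = (∑ k ∈ range (n+1), (n.choose k : ℤ) * (-1:ℤ)^((k+r).choose m))
        + ∑ k ∈ range (n+1), (n.choose k : ℤ) * (-1:ℤ)^((k+(r+1)).choose m) := by
  rw [pascal_sum (fun k => (-1:ℤ)^((k+r).choose m)) n]
  congr 1
  apply Finset.sum_congr rfl
  intro k hk
  have : k + 1 + r = k + (r + 1) := by omega
  rw [this]

private lemma Tpos (m : ℕ) (hm : 1 ≤ m) (hodd : Odd m) :
    ∀ n r : ℕ, 0 ≤ ∑ k ∈ range (n+1+1), ((n+1).choose k : ℤ) * (-1:ℤ)^((k+r).choose m) := by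
  intro n
  induction n with
  | zero =>
    intro r
    have h := eps_pair m hm hodd r
    simp only [Finset.sum_range_succ, Finset.sum_range_zero]
    norm_num
    have : 1 + r = r + 1 := by omega
    rw [this]
    linarith
  | succ n ih =>
    intro r
    rw [Trec m (n+1) r]
    exact add_nonneg (ih r) (ih (r+1))

private lemma Drec (g : ℕ → ℤ) (r n : ℕ) :
    ∑ k ∈ range (r+2), (-1:ℤ)^k * ((r+1).choose k : ℤ) * g (n + (r+1) - k)
      = (∑ k ∈ range (r+1), (-1:ℤ)^k * (r.choose k : ℤ) * g (n + 1 + r - k))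
        - ∑ k ∈ range (r+1), (-1:ℤ)^k * (r.choose k : ℤ) * g (n + r - k) := by
  rw [Finset.sum_range_succ' (fun k => (-1:ℤ)^k * ((r+1).choose k : ℤ) * g (n + (r+1) - k)) (r+1)]
  have h1 : ∀ k ∈ range (r+1),
      (-1:ℤ)^(k+1) * (((r+1).choose (k+1) : ℕ) : ℤ) * g (n + (r+1) - (k+1))
        = -((-1:ℤ)^k * (r.choose k : ℤ) * g (n + r - k))
          + (-((-1:ℤ)^k * (r.choose (k+1) : ℤ) * g (n + r - k))) := by
    intro k hk
    have he : n + (r+1) - (k+1) = n + r - k := by omega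
    rw [he, Nat.choose_succ_succ, pow_succ]
    push_cast; ring
  rw [Finset.sum_congr rfl h1, Finset.sum_add_distrib, Finset.sum_neg_distrib,
    Finset.sum_neg_distrib]
  have h2 : ∑ k ∈ range (r+1), (-1:ℤ)^k * (r.choose (k+1) : ℤ) * g (n + r - k)
      = ∑ k ∈ range r, (-1:ℤ)^k * (r.choose (k+1) : ℤ) * g (n + r - k) := by
    rw [Finset.sum_range_succ]
    simp [Nat.choose_succ_self]
  have h3 : ∑ k ∈ range (r+1), (-1:ℤ)^k * (r.choose k : ℤ) * g (n + 1 + r - k)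
      = (∑ k ∈ range r, -((-1:ℤ)^k * (r.choose (k+1) : ℤ) * g (n + r - k)))
        + g (n + 1 + r) := by
    rw [Finset.sum_range_succ' (fun k => (-1:ℤ)^k * (r.choose k : ℤ) * g (n + 1 + r - k)) r]
    congr 1
    · apply Finset.sum_congr rfl
      intro k hk
      have he : n + 1 + r - (k+1) = n + r - k := by omega
      rw [he, pow_succ]
      ring
    · simp
  rw [h2, h3]
  have he2 : n + (r+1) - 0 = n + 1 + r := by omega
  rw [he2]
  simp only [pow_zero, Nat.choose_zero_right, Nat.cast_one, one_mul]
  rw [Finset.sum_neg_distrib]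
  ring

private lemma Deq (m : ℕ) : ∀ r n : ℕ,
    ∑ k ∈ range (r+1), (-1:ℤ)^k * (r.choose k : ℤ) *
        (∑ j ∈ range (n + r - k + 1), ((n + r - k).choose j : ℤ) * (-1:ℤ)^(j.choose m))
      = ∑ k ∈ range (n+1), (n.choose k : ℤ) * (-1:ℤ)^((k+r).choose m) := by
  intro r
  induction r with
  | zero =>
    intro n
    simp
  | succ r ih =>
    intro n
    have hd := Drec (fun N => ∑ j ∈ range (N + 1), (N.choose j : ℤ) * (-1:ℤ)^(j.choose m)) r n
    rw [hd, ih (n+1), ih n]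
    have ht := Trec m n r
    linarith [ht]

theorem stmt_7 (m : ℕ) (hm : 1 ≤ m) (hodd : Odd m) :
    (∀ n : ℕ, 1 ≤ n → ∀ r : ℕ,
      0 ≤ ∑ k ∈ Finset.range (n + 1), (n.choose k : ℤ) * (-1 : ℤ) ^ ((k + r).choose m)) ∧
    (∀ n : ℕ, 1 ≤ n → ∀ r : ℕ,
      0 ≤ ∑ k ∈ Finset.range (r + 1), (-1 : ℤ) ^ k * (r.choose k : ℤ) *
          (∑ j ∈ Finset.range (n + r - k + 1),
            ((n + r - k).choose j : ℤ) * (-1 : ℤ) ^ (j.choose m))) := by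
  constructor
  · intro n hn r
    obtain ⟨n', rfl⟩ : ∃ n', n = n' + 1 := ⟨n - 1, by omega⟩
    exact Tpos m hm hodd n' r
  · intro n hn r
    rw [Deq m r n]
    obtain ⟨n', rfl⟩ : ∃ n', n = n' + 1 := ⟨n - 1, by omega⟩
    exact Tpos m hm hodd n' r
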